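/- In the affine Coxeter group of type Ã₁, generated by reflections a₀, a₁ of the real line at points 0 and 1, the Coxeter element w = a₁a₀ can be written as a product of two reflections in exactly the ways w = a_{i+1} a_i for i ∈ ℤ, where a_i denotes the reflection at the integer point i; consequently the interval [1, w] in absolute order consists of 1, w, and the infinitely many reflections a_i, i ∈ ℤ. -/

import Mathlib

/-- The reflection of the real line at the integer point `i`: `x ↦ 2i - x`. -/
def reflAt (i : ℤ) : Equiv.Perm ℝ where
  toFun x := 2 * i - x
  invFun x := 2 * i - x
  left_inv x := by simp
  right_inv x := by simp

/-- The affine Coxeter group of type `Ã₁`: the group generated by the reflections at `0`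
and `1`. -/
def Wtilde : Subgroup (Equiv.Perm ℝ) := Subgroup.closure {reflAt 0, reflAt 1}

/-- The set of reflections of `Wtilde`: conjugates of the generators `a₀, a₁`. -/
def Reflections : Set (Equiv.Perm ℝ) :=
  {t | ∃ g ∈ Wtilde, g * reflAt 0 * g⁻¹ = t ∨ g * reflAt 1 * g⁻¹ = t}

noncomputable def wordLen {G : Type*} [Group G] (R : Set G) (g : G) : ℕ :=
  sInf {k | ∃ l : List G, (∀ x ∈ l, x ∈ R) ∧ l.length = k ∧ l.prod = g}

/-- Absolute order with respect to reflection length. -/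
noncomputable def absLe (u v : Equiv.Perm ℝ) : Prop :=
  wordLen Reflections u + wordLen Reflections (u⁻¹ * v) = wordLen Reflections v

/-! ### Auxiliary development -/

/-- Translation by `2n`. -/
def transl (n : ℤ) : Equiv.Perm ℝ where
  toFun x := x + 2 * n
  invFun x := x - 2 * n
  left_inv x := by ring_nf
  right_inv x := by ring_nf

@[simp] lemma reflAt_apply (i : ℤ) (x : ℝ) : reflAt i x = 2 * i - x := rfl
@[simp] lemma transl_apply (n : ℤ) (x : ℝ) : transl n x = x + 2 * n := rfl

lemma reflAt_mul_reflAt (m n : ℤ) : reflAt m * reflAt n = transl (m - n) :=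
  Equiv.ext fun x => by simp [Equiv.Perm.mul_apply]; push_cast; ring

lemma transl_mul_transl (m n : ℤ) : transl m * transl n = transl (m + n) :=
  Equiv.ext fun x => by simp [Equiv.Perm.mul_apply]; push_cast; ring

lemma transl_mul_reflAt (m n : ℤ) : transl m * reflAt n = reflAt (m + n) :=
  Equiv.ext fun x => by simp [Equiv.Perm.mul_apply]; push_cast; ring

lemma reflAt_mul_transl (m n : ℤ) : reflAt m * transl n = reflAt (m - n) :=
  Equiv.ext fun x => by simp [Equiv.Perm.mul_apply]; push_cast; ring

lemma reflAt_inv (i : ℤ) : (reflAt i)⁻¹ = reflAt i := rfl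

lemma transl_inv (n : ℤ) : (transl n)⁻¹ = transl (-n) :=
  Equiv.ext fun x => by simp [transl, Equiv.Perm.inv_def, Equiv.symm]; push_cast; ring

lemma transl_zero : transl 0 = 1 := Equiv.ext fun x => by simp

lemma transl_inj {m n : ℤ} (h : transl m = transl n) : m = n := by
  have h0 := Equiv.ext_iff.mp h 0
  simp at h0
  exact_mod_cast h0

lemma reflAt_inj {m n : ℤ} (h : reflAt m = reflAt n) : m = n := by
  have h0 := Equiv.ext_iff.mp h 0
  simp at h0
  exact_mod_cast h0

lemma transl_ne_reflAt (m n : ℤ) : transl m ≠ reflAt n := by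
  intro h
  have h0 := Equiv.ext_iff.mp h 0
  have h1 := Equiv.ext_iff.mp h 1
  simp at h0 h1
  rw [h0] at h1
  linarith

lemma transl_eq_one_iff {n : ℤ} : transl n = 1 ↔ n = 0 := by
  constructor
  · intro h
    have h0 := Equiv.ext_iff.mp h 0
    simp at h0
    exact_mod_cast h0
  · rintro rfl; exact transl_zero

lemma w_eq : reflAt 1 * reflAt 0 = transl 1 := by
  rw [reflAt_mul_reflAt]
  norm_num

lemma transl_mem (n : ℤ) : transl n ∈ Wtilde := by
  have h1 : transl 1 ∈ Wtilde := by
    rw [← w_eq]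
    exact mul_mem (Subgroup.subset_closure (by simp)) (Subgroup.subset_closure (by simp))
  induction n using Int.induction_on with
  | zero => rw [transl_zero]; exact one_mem _
  | succ k ih =>
    have : transl (k + 1) = transl k * transl 1 := (transl_mul_transl k 1).symm
    rw [this]; exact mul_mem ih h1
  | pred k ih =>
    have : transl (-k - 1) = transl (-k) * (transl 1)⁻¹ := by
      rw [transl_inv, transl_mul_transl]; ring_nf
    rw [this]; exact mul_mem ih (inv_mem h1)

lemma wtilde_form {g : Equiv.Perm ℝ} (hg : g ∈ Wtilde) :
    (∃ n : ℤ, g = transl n) ∨ (∃ n : ℤ, g = reflAt n) := by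
  induction hg using Subgroup.closure_induction with
  | mem x hx =>
    rcases hx with h | h
    · exact Or.inr ⟨0, h⟩
    · exact Or.inr ⟨1, h⟩
  | one => exact Or.inl ⟨0, transl_zero.symm⟩
  | mul x y hx hy ihx ihy =>
    rcases ihx with ⟨m, rfl⟩ | ⟨m, rfl⟩ <;> rcases ihy with ⟨n, rfl⟩ | ⟨n, rfl⟩
    · exact Or.inl ⟨m + n, transl_mul_transl m n⟩
    · exact Or.inr ⟨m + n, transl_mul_reflAt m n⟩
    · exact Or.inr ⟨m - n, reflAt_mul_transl m n⟩
    · exact Or.inl ⟨m - n, reflAt_mul_reflAt m n⟩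
  | inv x hx ihx =>
    rcases ihx with ⟨m, rfl⟩ | ⟨m, rfl⟩
    · exact Or.inl ⟨-m, transl_inv m⟩
    · exact Or.inr ⟨m, reflAt_inv m⟩

lemma reflAt_mem_reflections (i : ℤ) : reflAt i ∈ Reflections := by
  rcases Int.even_or_odd i with ⟨k, hk⟩ | ⟨k, hk⟩
  · refine ⟨transl k, transl_mem k, Or.inl ?_⟩
    rw [transl_inv, transl_mul_reflAt, reflAt_mul_transl]
    congr 1; omega
  · refine ⟨transl k, transl_mem k, Or.inr ?_⟩
    rw [transl_inv, transl_mul_reflAt, reflAt_mul_transl]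
    congr 1; omega

lemma mem_reflections_iff {t : Equiv.Perm ℝ} : t ∈ Reflections ↔ ∃ i : ℤ, t = reflAt i := by
  constructor
  · rintro ⟨g, hg, h | h⟩ <;> rcases wtilde_form hg with ⟨m, rfl⟩ | ⟨m, rfl⟩ <;> rw [← h]
    · rw [transl_inv, transl_mul_reflAt, reflAt_mul_transl]; exact ⟨_, rfl⟩
    · rw [reflAt_inv, reflAt_mul_reflAt, transl_mul_reflAt]; exact ⟨_, rfl⟩
    · rw [transl_inv, transl_mul_reflAt, reflAt_mul_transl]; exact ⟨_, rfl⟩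
    · rw [reflAt_inv, reflAt_mul_reflAt, transl_mul_reflAt]; exact ⟨_, rfl⟩
  · rintro ⟨i, rfl⟩; exact reflAt_mem_reflections i

/-! ### word length computations -/

lemma wordLen_set_nonempty_of_ne {R : Set (Equiv.Perm ℝ)} {g : Equiv.Perm ℝ}
    (h : wordLen R g ≠ 0) :
    {k | ∃ l : List (Equiv.Perm ℝ), (∀ x ∈ l, x ∈ R) ∧ l.length = k ∧ l.prod = g}.Nonempty := by
  by_contra h'
  rw [Set.not_nonempty_iff_eq_empty] at h'
  rw [wordLen, h', Nat.sInf_empty] at h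
  exact h rfl

lemma wordLen_spec {R : Set (Equiv.Perm ℝ)} {g : Equiv.Perm ℝ}
    (hne : {k | ∃ l : List (Equiv.Perm ℝ), (∀ x ∈ l, x ∈ R) ∧ l.length = k ∧ l.prod = g}.Nonempty) :
    ∃ l : List (Equiv.Perm ℝ), (∀ x ∈ l, x ∈ R) ∧ l.length = wordLen R g ∧ l.prod = g :=
  Nat.sInf_mem hne

lemma eq_one_of_wordLen_eq_zero {g : Equiv.Perm ℝ}
    (hg : ∃ l : List (Equiv.Perm ℝ), (∀ x ∈ l, x ∈ Reflections) ∧ l.prod = g)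
    (h : wordLen Reflections g = 0) : g = 1 := by
  obtain ⟨l, hl, hp⟩ := hg
  have hne : {k | ∃ l : List (Equiv.Perm ℝ), (∀ x ∈ l, x ∈ Reflections) ∧ l.length = k ∧
      l.prod = g}.Nonempty := ⟨l.length, l, hl, rfl, hp⟩
  have := Nat.sInf_mem hne
  rw [← wordLen, h] at this
  obtain ⟨l', _, hlen, hprod⟩ := this
  rw [List.length_eq_zero_iff] at hlen
  rw [hlen] at hprod
  simpa using hprod.symm

lemma wordLen_one' : wordLen Reflections (1 : Equiv.Perm ℝ) = 0 :=
  Nat.sInf_eq_zero.mpr (Or.inl ⟨[], by simp, rfl, rfl⟩)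

lemma wordLen_reflAt (i : ℤ) : wordLen Reflections (reflAt i) = 1 := by
  have h1 : (1 : ℕ) ∈ {k | ∃ l : List (Equiv.Perm ℝ), (∀ x ∈ l, x ∈ Reflections) ∧
      l.length = k ∧ l.prod = reflAt i} :=
    ⟨[reflAt i], by simp [reflAt_mem_reflections], rfl, by simp⟩
  refine le_antisymm (Nat.sInf_le h1) ?_
  rw [Nat.one_le_iff_ne_zero]
  intro h0
  have := eq_one_of_wordLen_eq_zero ⟨[reflAt i], by simp [reflAt_mem_reflections], by simp⟩ h0
  have h2 := Equiv.ext_iff.mp this ((i : ℝ) + 1)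
  simp at h2
  linarith

lemma wordLen_transl_one : wordLen Reflections (transl 1) = 2 := by
  have h2 : (2 : ℕ) ∈ {k | ∃ l : List (Equiv.Perm ℝ), (∀ x ∈ l, x ∈ Reflections) ∧
      l.length = k ∧ l.prod = transl 1} :=
    ⟨[reflAt 1, reflAt 0], by simp [reflAt_mem_reflections], rfl, by
      simp [reflAt_mul_reflAt]⟩
  refine le_antisymm (Nat.sInf_le h2) ?_
  have hne : {k | ∃ l : List (Equiv.Perm ℝ), (∀ x ∈ l, x ∈ Reflections) ∧
      l.length = k ∧ l.prod = transl 1}.Nonempty := ⟨2, h2⟩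
  have hmem := Nat.sInf_mem hne
  rw [← wordLen] at hmem
  obtain ⟨l, hl, hlen, hprod⟩ := hmem
  by_contra hlt
  push_neg at hlt
  rw [← hlen] at hlt
  have hk : l.length = 0 ∨ l.length = 1 := by omega
  rcases hk with hk | hk
  · rw [List.length_eq_zero_iff] at hk
    rw [hk] at hprod
    simp at hprod
    have := transl_eq_one_iff.mp hprod.symm
    omega
  · rw [List.length_eq_one_iff] at hk
    obtain ⟨a, rfl⟩ := hk
    simp at hprod
    have ha : a ∈ Reflections := hl a (by simp)
    obtain ⟨j, rfl⟩ := mem_reflections_iff.mp ha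
    exact transl_ne_reflAt 1 j hprod.symm

lemma list_two_prod {x : Equiv.Perm ℝ} {l : List (Equiv.Perm ℝ)}
    (hl : ∀ y ∈ l, y ∈ Reflections) (hlen : l.length = 2) (hprod : l.prod = x) :
    ∃ i j : ℤ, x = reflAt j * reflAt i := by
  rw [List.length_eq_two] at hlen
  obtain ⟨a, b, rfl⟩ := hlen
  obtain ⟨j, rfl⟩ := mem_reflections_iff.mp (hl a (by simp))
  obtain ⟨i, rfl⟩ := mem_reflections_iff.mp (hl b (by simp))
  exact ⟨i, j, by simpa using hprod.symm⟩

/-- In type `Ã₁`, the Coxeter element `w = a₁a₀` (the translation `x ↦ x + 2`) can be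
written as a product of two reflections exactly in the ways `w = a_{i+1} aᵢ`, `i ∈ ℤ`;
consequently the interval `[1, w]` in absolute order consists of `1`, `w`, and the
reflections `aᵢ`, `i ∈ ℤ`. -/
theorem coxeter_element_factorizations_A1tilde :
    (∀ u v : Equiv.Perm ℝ, u ∈ Reflections → v ∈ Reflections →
      (u * v = reflAt 1 * reflAt 0 ↔ ∃ i : ℤ, u = reflAt (i + 1) ∧ v = reflAt i)) ∧
    (∀ x : Equiv.Perm ℝ, absLe x (reflAt 1 * reflAt 0) ↔
      (x = 1 ∨ x = reflAt 1 * reflAt 0 ∨ ∃ i : ℤ, x = reflAt i)) := by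
  constructor
  · intro u v hu hv
    obtain ⟨j, rfl⟩ := mem_reflections_iff.mp hu
    obtain ⟨i, rfl⟩ := mem_reflections_iff.mp hv
    rw [w_eq, reflAt_mul_reflAt]
    constructor
    · intro h
      have := transl_inj h
      refine ⟨i, ?_, rfl⟩
      congr 1; omega
    · rintro ⟨i', h1, h2⟩
      have hj := reflAt_inj h1
      have hi := reflAt_inj h2
      congr 1; omega
  · intro x
    rw [absLe, w_eq, wordLen_transl_one]
    constructor
    · intro h
      have hcases : wordLen Reflections x = 0 ∧ wordLen Reflections (x⁻¹ * transl 1) = 2 ∨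
          wordLen Reflections x = 1 ∧ wordLen Reflections (x⁻¹ * transl 1) = 1 ∨
          wordLen Reflections x = 2 ∧ wordLen Reflections (x⁻¹ * transl 1) = 0 := by omega
      rcases hcases with ⟨ha, hb⟩ | ⟨ha, hb⟩ | ⟨ha, hb⟩
      · -- x = 1
        left
        obtain ⟨l, hl, hlen, hprod⟩ := wordLen_spec (wordLen_set_nonempty_of_ne (by rw [hb]; omega))
        rw [hb] at hlen
        obtain ⟨i, j, hx⟩ := list_two_prod hl hlen hprod
        have hx' : x = transl 1 * reflAt i * reflAt j := by
          have : x * (x⁻¹ * transl 1) = transl 1 := by group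
          rw [hx] at this
          calc x = transl 1 * (reflAt j * reflAt i)⁻¹ := by
                  rw [← this]; group
            _ = transl 1 * reflAt i * reflAt j := by
                  rw [mul_inv_rev, reflAt_inv, reflAt_inv, mul_assoc]
        refine eq_one_of_wordLen_eq_zero ⟨[transl 1 * reflAt i, reflAt j], ?_, by simp [hx']⟩ ha
        intro y hy
        simp at hy
        rcases hy with rfl | rfl
        · rw [transl_mul_reflAt]; exact reflAt_mem_reflections _
        · exact reflAt_mem_reflections _
      · -- x is a reflection
        right; right
        obtain ⟨l, hl, hlen, hprod⟩ := wordLen_spec (wordLen_set_nonempty_of_ne (by rw [ha]; omega))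
        rw [ha, List.length_eq_one_iff] at hlen
        obtain ⟨a, rfl⟩ := hlen
        simp at hprod
        rw [← hprod]
        exact mem_reflections_iff.mp (hl a (by simp))
      · -- x = w
        right; left
        obtain ⟨l, hl, hlen, hprod⟩ := wordLen_spec (wordLen_set_nonempty_of_ne (by rw [ha]; omega))
        rw [ha] at hlen
        obtain ⟨i, j, hx⟩ := list_two_prod hl hlen hprod
        have : x⁻¹ * transl 1 = 1 := by
          refine eq_one_of_wordLen_eq_zero ⟨[reflAt i, reflAt j * transl 1], ?_, ?_⟩ hb
          · intro y hy
            simp at hy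
            rcases hy with rfl | rfl
            · exact reflAt_mem_reflections _
            · rw [reflAt_mul_transl]; exact reflAt_mem_reflections _
          · simp [hx, mul_inv_rev, reflAt_inv, mul_assoc]
        have := congrArg (x * ·) this
        simpa [← mul_assoc] using this.symm
    · rintro (rfl | rfl | ⟨i, rfl⟩)
      · simp [wordLen_one', wordLen_transl_one]
      · simp [wordLen_transl_one, wordLen_one']
      · have : (reflAt i)⁻¹ * transl 1 = reflAt (i - 1) := by
          rw [reflAt_inv, reflAt_mul_transl]
        rw [this, wordLen_reflAt, wordLen_reflAt]
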